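/- Let (g_k) be a sequence of pairwise disjoint measurable subsets of (0,1) with λ(g_k) = 4^{−k−4^k} for k ≥ 1, and let y = ∑_{k≥1} 4^{4^k} χ_{g_k}. Then there is a constant C > 0 such that C⁻¹/log(e/t) ≤ ∫₀¹ min{y(s), t·y(s)²} ds ≤ C/log(e/t) for all 0 < t ≤ 1. -/

import Mathlib

open MeasureTheory Set
open scoped ENNReal NNReal

noncomputable section

lemma rp4_pos (x : ℝ) : 0 < (4:ℝ) ^ x := Real.rpow_pos_of_pos (by norm_num) x

lemma log4_ge_one : 1 ≤ Real.log 4 := by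
  rw [Real.le_log_iff_exp_le (by norm_num)]
  exact (Real.exp_one_lt_d9.le.trans (by norm_num))

lemma log4_lt : Real.log 4 < 1.4 := by
  have : Real.log 4 = 2 * Real.log 2 := by
    rw [show (4:ℝ) = 2^2 by norm_num, Real.log_pow]; push_cast; ring
  rw [this]; nlinarith [Real.log_two_lt_d9]

lemma one_le_mul_rpow_iff {t : ℝ} (ht : 0 < t) (A : ℝ) :
    1 ≤ t * (4:ℝ) ^ A ↔ 0 ≤ Real.log t + A * Real.log 4 := by
  rw [← Real.log_rpow (by norm_num : (0:ℝ) < 4),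
    ← Real.log_mul (ne_of_gt ht) (ne_of_gt (rp4_pos A)),
    Real.log_nonneg_iff (mul_pos ht (rp4_pos A))]

lemma geo_shift : ∑' m : ℕ, ((1:ℝ)/4) ^ (m+1) = 1/3 := by
  have h : ∀ m : ℕ, ((1:ℝ)/4) ^ (m+1) = ((1:ℝ)/4)^m * (1/4) := fun m => pow_succ _ _
  rw [tsum_congr h, tsum_mul_right, tsum_geometric_of_lt_one (by norm_num) (by norm_num)]
  norm_num

lemma geo_summable : Summable (fun m : ℕ => ((1:ℝ)/4) ^ (m+1)) := by
  have := summable_geometric_of_lt_one (r := (1:ℝ)/4) (by norm_num) (by norm_num)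
  exact (summable_nat_add_iff 1).mpr this

/-- the summand -/
def fS (t : ℝ) (m : ℕ) : ℝ :=
  ((1:ℝ)/4)^(m+1) * min 1 (t * (4:ℝ)^((4:ℝ)^((m:ℝ)+1)))

lemma fS_nonneg (t : ℝ) (ht : 0 < t) (m : ℕ) : 0 ≤ fS t m := by
  unfold fS
  have : (0:ℝ) ≤ min 1 (t * (4:ℝ)^((4:ℝ)^((m:ℝ)+1))) :=
    le_min (by norm_num) (by positivity)
  positivity

lemma fS_le (t : ℝ) (m : ℕ) : fS t m ≤ ((1:ℝ)/4)^(m+1) :=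
  mul_le_of_le_one_right (by positivity) (min_le_left _ _)

lemma fS_summable (t : ℝ) (ht : 0 < t) : Summable (fS t) :=
  Summable.of_nonneg_of_le (fS_nonneg t ht) (fS_le t) geo_summable

lemma S_bounds (t : ℝ) (ht : 0 < t) (ht1 : t ≤ 1) :
    (1/32) / Real.log (Real.exp 1 / t) ≤ (∑' m, fS t m) ∧
    (∑' m, fS t m) ≤ 32 / Real.log (Real.exp 1 / t) := by
  have hu0 : 0 ≤ -Real.log t := neg_nonneg.mpr (Real.log_nonpos ht.le ht1)
  have hLdef : Real.log (Real.exp 1 / t) = 1 + -Real.log t := by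
    rw [Real.log_div (Real.exp_ne_zero 1) (ne_of_gt ht), Real.log_exp]; ring
  set u := -Real.log t with hu
  have hL0 : 0 < 1 + u := by linarith
  -- cast helper
  have hcast : ∀ k : ℕ, (4:ℝ) ^ ((k:ℕ):ℝ) = (4:ℝ)^k := fun k => Real.rpow_natCast 4 k
  -- the predicate
  set P : ℕ → Prop := fun n => 1 ≤ t * (4:ℝ)^((4:ℝ)^((n:ℝ)+1)) with hP
  have hex : ∃ n, P n := by
    obtain ⟨n, hn⟩ := exists_nat_ge u
    refine ⟨n, ?_⟩
    show 1 ≤ t * (4:ℝ)^((4:ℝ)^((n:ℝ)+1))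
    rw [one_le_mul_rpow_iff ht]
    have h1 : (n:ℝ) + 1 ≤ (4:ℝ)^((n:ℝ)+1) := by
      have : (n+1 : ℕ) ≤ 4^(n+1) := le_of_lt (Nat.lt_pow_self (by norm_num : 1 < 4))
      have h2 : (4:ℝ)^((n:ℝ)+1) = ((4^(n+1) : ℕ) : ℝ) := by
        rw [show ((n:ℝ)+1) = ((n+1:ℕ):ℝ) by push_cast; ring, hcast]; push_cast; ring
      rw [h2]; exact_mod_cast (by exact_mod_cast this : ((n+1:ℕ):ℝ) ≤ ((4^(n+1):ℕ):ℝ))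
    have h2 : u ≤ (4:ℝ)^((n:ℝ)+1) * Real.log 4 := by
      calc u ≤ (n:ℝ) := hn
        _ ≤ (4:ℝ)^((n:ℝ)+1) := by linarith
        _ ≤ (4:ℝ)^((n:ℝ)+1) * Real.log 4 := le_mul_of_one_le_right (by positivity) log4_ge_one
    linarith [h2]
  classical
  set N := Nat.find hex with hN
  have hPN : P N := Nat.find_spec hex
  have hmin : ∀ j, j < N → ¬ P j := fun j hj => Nat.find_min hex hj
  clear_value N
  have hPN' : u ≤ (4:ℝ)^((N:ℝ)+1) * Real.log 4 := by
    have := (one_le_mul_rpow_iff ht _).mp hPN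
    linarith
  -- main term lower bound
  have hterm : ((1:ℝ)/4)^(N+1) ≤ ∑' m, fS t m := by
    have : fS t N = ((1:ℝ)/4)^(N+1) := by
      unfold fS
      rw [min_eq_left hPN, mul_one]
    rw [← this]
    exact Summable.le_tsum (fS_summable t ht) N (fun j _ => fS_nonneg t ht j)
  constructor
  · -- LOWER BOUND
    rw [hLdef]
    rcases Nat.eq_zero_or_pos N with h0 | hpos
    · have : (1:ℝ)/32 / (1 + u) ≤ 1/32 := div_le_self (by norm_num) (by linarith)
      calc (1:ℝ)/32 / (1+u) ≤ 1/32 := this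
        _ ≤ ((1:ℝ)/4)^(N+1) := by rw [h0]; norm_num
        _ ≤ _ := hterm
    · -- N ≥ 1 : minimality at N-1
      obtain ⟨j, hj⟩ : ∃ j, N = j + 1 := ⟨N-1, (Nat.succ_pred_eq_of_pos hpos).symm⟩
      have hnot : ¬ P j := hmin j (by omega)
      have hjlt : (4:ℝ)^((j:ℝ)+1) * Real.log 4 < u := by
        by_contra hc
        push_neg at hc
        exact hnot ((one_le_mul_rpow_iff ht _).mpr (by linarith))
      -- (4:ℝ)^((j:ℝ)+1) = 4^N (nat pow)
      have hEN : (4:ℝ)^((j:ℝ)+1) = (4:ℝ)^N := by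
        rw [show ((j:ℝ)+1) = ((N:ℕ):ℝ) by rw [hj]; push_cast; ring, hcast]
      rw [hEN] at hjlt
      have h4N : (4:ℝ)^N < u := by
        nlinarith [log4_ge_one, (by positivity : (0:ℝ) < (4:ℝ)^N)]
      have hkey : (1:ℝ)/32 ≤ ((1:ℝ)/4)^(N+1) * (1 + u) := by
        have hpow : ((1:ℝ)/4)^(N+1) * (4:ℝ)^N = 1/4 := by
          rw [div_pow, one_pow, pow_succ]
          field_simp
        nlinarith [pow_pos (by norm_num : (0:ℝ) < 1/4) (N+1)]
      calc (1:ℝ)/32 / (1+u) ≤ ((1:ℝ)/4)^(N+1) := by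
            rw [div_le_iff₀ hL0]; linarith
        _ ≤ _ := hterm
  · -- UPPER BOUND
    rw [hLdef]
    rcases Nat.eq_zero_or_pos N with h0 | hpos
    · -- N = 0 : u ≤ 4 log 4, S ≤ 1/3
      have hu4 : u ≤ 4 * Real.log 4 := by
        have := hPN'
        rw [h0] at this
        simpa using this
      have hS : (∑' m, fS t m) ≤ 1/3 := by
        calc (∑' m, fS t m) ≤ ∑' m, ((1:ℝ)/4)^(m+1) :=
              Summable.tsum_le_tsum (fS_le t) (fS_summable t ht) geo_summable
          _ = 1/3 := geo_shift
      have h7 : 1 + u ≤ 7 := by nlinarith [log4_lt]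
      rw [le_div_iff₀ hL0]
      nlinarith
    · obtain ⟨j, hj⟩ : ∃ j, N = j + 1 := ⟨N-1, (Nat.succ_pred_eq_of_pos hpos).symm⟩
      have hnot : ¬ P j := hmin j (by omega)
      have hjlt : (4:ℝ)^((j:ℝ)+1) * Real.log 4 < u := by
        by_contra hc
        push_neg at hc
        exact hnot ((one_le_mul_rpow_iff ht _).mpr (by linarith))
      have hEN : (4:ℝ)^((j:ℝ)+1) = (4:ℝ)^N := by
        rw [show ((j:ℝ)+1) = ((N:ℕ):ℝ) by rw [hj]; push_cast; ring, hcast]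
      rw [hEN] at hjlt
      -- split the sum at j
      have hsplit := (fS_summable t ht).sum_add_tsum_nat_add j
      -- part 1 : each m < j has fS t m ≤ (1/4)^(m+1) * (1/4)^N
      have hpart1 : ∑ m ∈ Finset.range j, fS t m ≤ (1/3) * ((1:ℝ)/4)^N := by
        have hbound : ∀ m ∈ Finset.range j, fS t m ≤ ((1:ℝ)/4)^(m+1) * ((1:ℝ)/4)^N := by
          intro m hm
          rw [Finset.mem_range] at hm
          unfold fS
          have hmin : min 1 (t * (4:ℝ)^((4:ℝ)^((m:ℝ)+1))) ≤ ((1:ℝ)/4)^N := by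
            refine (min_le_right _ _).trans ?_
            -- show t * 4^(4^(m+1)) ≤ (1/4)^N via logs
            have hx : 0 < t * (4:ℝ)^((4:ℝ)^((m:ℝ)+1)) := by positivity
            have hy : (0:ℝ) < ((1:ℝ)/4)^N := by positivity
            rw [← Real.log_le_log_iff hx hy, Real.log_mul (ne_of_gt ht) (ne_of_gt (rp4_pos _)),
              Real.log_rpow (by norm_num : (0:ℝ) < 4), Real.log_pow,
              show ((1:ℝ)/4) = (4:ℝ)⁻¹ by norm_num, Real.log_inv]
            -- goal : log t + 4^(m+1) * log 4 ≤ N * (-log 4)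
            have hm1 : (4:ℝ)^((m:ℝ)+1) = (4:ℝ)^(m+1 : ℕ) := by
              rw [show ((m:ℝ)+1) = ((m+1:ℕ):ℝ) by push_cast; ring, hcast]
            rw [hm1]
            -- need : 4^(m+1) * log 4 + N * log 4 ≤ u, i.e. (4^(m+1)+N) log4 ≤ 4^N log4 < u
            have hnat : (4:ℕ)^(m+1) + N ≤ 4^N := by
              have h1 : (4:ℕ)^(m+1) ≤ 4^j := Nat.pow_le_pow_right (by norm_num) (by omega)
              have h2 : j < 4^j := Nat.lt_pow_self (by norm_num : 1 < 4)
              have h3 : (4:ℕ)^N = 4 * 4^j := by rw [hj, pow_succ]; ring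
              omega
            have hnat' : ((4:ℝ)^(m+1) + (N:ℝ)) ≤ (4:ℝ)^N := by
              have := hnat
              push_cast at this ⊢
              exact_mod_cast this
            have hlog4 : (0:ℝ) < Real.log 4 := lt_of_lt_of_le one_pos log4_ge_one
            have : ((4:ℝ)^(m+1) + (N:ℝ)) * Real.log 4 ≤ (4:ℝ)^N * Real.log 4 :=
              mul_le_mul_of_nonneg_right hnat' hlog4.le
            have hu' : (4:ℝ)^N * Real.log 4 < u := hjlt
            have : Real.log t = -u := by rw [hu]; ring
            nlinarith
          exact mul_le_mul_of_nonneg_left hmin (by positivity)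
        have hsum_le := Finset.sum_le_sum hbound
        rw [← Finset.sum_mul] at hsum_le
        refine hsum_le.trans ?_
        have hle : (∑ m ∈ Finset.range j, ((1:ℝ)/4)^(m+1)) ≤ 1/3 := by
          rw [← geo_shift]
          exact Summable.sum_le_tsum _ (fun i _ => by positivity) geo_summable
        exact mul_le_mul_of_nonneg_right hle (by positivity)
      -- part 2 : tail
      have hpart2 : (∑' i, fS t (i + j)) ≤ (4/3) * ((1:ℝ)/4)^N := by
        have hsum3 : Summable (fun i : ℕ => ((1:ℝ)/4)^(i+1) * ((1:ℝ)/4)^j) :=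
          geo_summable.mul_right _
        have hb : ∀ i : ℕ, fS t (i + j) ≤ ((1:ℝ)/4)^(i+1) * ((1:ℝ)/4)^j := by
          intro i
          refine (fS_le t (i+j)).trans (le_of_eq ?_)
          rw [← pow_add]
          ring_nf
        have hsum2 : Summable (fun i => fS t (i + j)) :=
          Summable.of_nonneg_of_le (fun i => fS_nonneg t ht (i+j)) hb hsum3
        calc (∑' i, fS t (i + j)) ≤ ∑' i : ℕ, ((1:ℝ)/4)^(i+1) * ((1:ℝ)/4)^j :=
              Summable.tsum_le_tsum hb hsum2 hsum3
          _ = (1/3) * ((1:ℝ)/4)^j := by rw [tsum_mul_right, geo_shift]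
          _ = (4/3) * ((1:ℝ)/4)^N := by
              rw [hj, pow_succ]; ring
      -- combine
      have hS : (∑' m, fS t m) ≤ (5/3) * ((1:ℝ)/4)^N := by
        rw [← hsplit]; linarith
      -- final : (5/3)(1/4)^N ≤ 32/(1+u)
      have hub : 1 + u ≤ (4:ℝ)^(N+1) * (24/10) := by
        have h1 : (4:ℝ)^((N:ℝ)+1) = (4:ℝ)^(N+1:ℕ) := by
          rw [show ((N:ℝ)+1) = ((N+1:ℕ):ℝ) by push_cast; ring, hcast]
        rw [h1] at hPN'
        have h2 : (1:ℝ) ≤ (4:ℝ)^(N+1) := by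
          apply one_le_pow₀
          norm_num
        nlinarith [log4_lt, pow_pos (by norm_num : (0:ℝ) < 4) (N+1)]
      have hfin : (5/3) * ((1:ℝ)/4)^N * (1 + u) ≤ 32 := by
        have hpow : ((1:ℝ)/4)^N * (4:ℝ)^(N+1) = 4 := by
          rw [div_pow, one_pow, pow_succ]
          field_simp
        nlinarith [pow_pos (by norm_num : (0:ℝ) < 1/4) N, hL0]
      rw [le_div_iff₀ hL0]
      exact le_trans (mul_le_mul_of_nonneg_right hS hL0.le) hfin

lemma key_arith (t : ℝ) (m : ℕ) :
    min ((4:ℝ)^((4:ℝ)^((m:ℝ)+1))) (t * ((4:ℝ)^((4:ℝ)^((m:ℝ)+1)))^2) *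
      (4:ℝ)^(-((m:ℝ)+1) - (4:ℝ)^((m:ℝ)+1)) = fS t m := by
  have hq : (4:ℝ)^(-((m:ℝ)+1)) = ((1:ℝ)/4)^(m+1) := by
    rw [Real.rpow_neg (by norm_num), show ((m:ℝ)+1) = ((m+1:ℕ):ℝ) by push_cast; ring,
      Real.rpow_natCast, div_pow, one_pow, one_div]
  have h1 : (4:ℝ)^((4:ℝ)^((m:ℝ)+1)) * (4:ℝ)^(-((m:ℝ)+1) - (4:ℝ)^((m:ℝ)+1))
      = ((1:ℝ)/4)^(m+1) := by
    rw [← Real.rpow_add (by norm_num),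
      show (4:ℝ)^((m:ℝ)+1) + (-((m:ℝ)+1) - (4:ℝ)^((m:ℝ)+1)) = -((m:ℝ)+1) by ring, hq]
  have h2 : t * ((4:ℝ)^((4:ℝ)^((m:ℝ)+1)))^2 * (4:ℝ)^(-((m:ℝ)+1) - (4:ℝ)^((m:ℝ)+1))
      = ((1:ℝ)/4)^(m+1) * (t * (4:ℝ)^((4:ℝ)^((m:ℝ)+1))) := by
    linear_combination (t * (4:ℝ)^((4:ℝ)^((m:ℝ)+1))) * h1
  have hw0 : (0:ℝ) ≤ (4:ℝ)^(-((m:ℝ)+1) - (4:ℝ)^((m:ℝ)+1)) := (rp4_pos _).le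
  unfold fS
  rw [min_mul_of_nonneg _ _ hw0, h1, h2, mul_min_of_nonneg _ _
    (by positivity : (0:ℝ) ≤ ((1:ℝ)/4)^(m+1)), mul_one]

theorem integral_eq
    (g : ℕ → Set ℝ)
    (hmeas : ∀ k, MeasurableSet (g k))
    (hsub : ∀ k, g k ⊆ Ioo (0:ℝ) 1)
    (hdisj : Pairwise (Function.onFun Disjoint g))
    (hvol : ∀ k : ℕ, 1 ≤ k →
      volume (g k) = ENNReal.ofReal ((4:ℝ) ^ (-(k:ℝ) - (4:ℝ) ^ (k:ℝ))))
    (y : ℝ → ℝ)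
    (hy : ∀ s, y s =
      ∑' k : ℕ, (4:ℝ) ^ ((4:ℝ) ^ ((k:ℝ) + 1)) * (g (k + 1)).indicator (fun _ => (1:ℝ)) s)
    (t : ℝ) (ht : 0 < t) :
    (∫ s in Ioo (0:ℝ) 1, min (y s) (t * y s ^ 2)) = ∑' m, fS t m := by
  set A : ℕ → ℝ := fun m => (4:ℝ)^((4:ℝ)^((m:ℝ)+1)) with hAdef
  set c : ℕ → ℝ := fun m => min (A m) (t * (A m)^2) with hcdef
  have hc_nonneg : ∀ m, 0 ≤ c m := by
    intro m
    exact le_min (rp4_pos _).le (by positivity)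
  have hc_le : ∀ m, c m ≤ A m := fun m => min_le_left _ _
  -- volume of g (m+1) as ofReal
  have hvol' : ∀ m : ℕ, volume (g (m+1)) =
      ENNReal.ofReal ((4:ℝ)^(-((m:ℝ)+1) - (4:ℝ)^((m:ℝ)+1))) := by
    intro m
    rw [hvol (m+1) (by omega)]
    norm_num [Nat.cast_add]
  -- pointwise identity
  have hpt : ∀ s, min (y s) (t * y s ^ 2) =
      ∑' m : ℕ, c m * (g (m+1)).indicator (fun _ => (1:ℝ)) s := by
    intro s
    by_cases hs : ∃ m : ℕ, s ∈ g (m+1)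
    · obtain ⟨m₀, hm₀⟩ := hs
      have hunique : ∀ k : ℕ, k ≠ m₀ → s ∉ g (k+1) := by
        intro k hk hks
        exact (hdisj (show k+1 ≠ m₀+1 by omega)).le_bot ⟨hks, hm₀⟩
      have hys : y s = A m₀ := by
        rw [hy s]
        rw [tsum_eq_single m₀ ?_]
        · rw [indicator_of_mem hm₀, mul_one]
        · intro k hk
          rw [indicator_of_notMem (hunique k hk), mul_zero]
      have hrhs : (∑' m : ℕ, c m * (g (m+1)).indicator (fun _ => (1:ℝ)) s) = c m₀ := by
        rw [tsum_eq_single m₀ ?_]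
        · rw [indicator_of_mem hm₀, mul_one]
        · intro k hk
          rw [indicator_of_notMem (hunique k hk), mul_zero]
      rw [hys, hrhs]
    · push_neg at hs
      have hys : y s = 0 := by
        rw [hy s]
        convert tsum_zero with k
        rw [indicator_of_notMem (hs k), mul_zero]
      have hrhs : (∑' m : ℕ, c m * (g (m+1)).indicator (fun _ => (1:ℝ)) s) = 0 := by
        convert tsum_zero with k
        rw [indicator_of_notMem (hs k), mul_zero]
      rw [hys, hrhs]
      simp
  rw [integral_congr_ae (Filter.Eventually.of_forall fun s => hpt s)]
  -- swap integral and sum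
  have hmeas_i : ∀ m : ℕ, AEStronglyMeasurable
      (fun s => c m * (g (m+1)).indicator (fun _ => (1:ℝ)) s)
      (volume.restrict (Ioo (0:ℝ) 1)) := by
    intro m
    exact ((measurable_const.indicator (hmeas (m+1))).const_mul (c m)).aestronglyMeasurable
  have hlint : ∀ m : ℕ, (∫⁻ s in Ioo (0:ℝ) 1,
      ‖c m * (g (m+1)).indicator (fun _ => (1:ℝ)) s‖₊ ∂volume)
      = ENNReal.ofReal (c m) * volume (g (m+1)) := by
    intro m
    have heq : (fun s => (‖c m * (g (m+1)).indicator (fun _ => (1:ℝ)) s‖₊ : ℝ≥0∞)) =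
        fun s => (g (m+1)).indicator (fun _ => ENNReal.ofReal (c m)) s := by
      funext s
      by_cases hsm : s ∈ g (m+1)
      · rw [indicator_of_mem hsm, indicator_of_mem hsm, mul_one,
          ← enorm_eq_nnnorm, Real.enorm_eq_ofReal (hc_nonneg m)]
      · rw [indicator_of_notMem hsm, indicator_of_notMem hsm, mul_zero]
        simp
    rw [heq, lintegral_indicator (hmeas (m+1)), setLIntegral_const,
      Measure.restrict_apply (hmeas (m+1)),
      inter_eq_self_of_subset_left (hsub (m+1))]
  have hfin : (∑' m : ℕ, ∫⁻ s in Ioo (0:ℝ) 1,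
      ‖c m * (g (m+1)).indicator (fun _ => (1:ℝ)) s‖₊ ∂volume) ≠ ⊤ := by
    have hb : ∀ m : ℕ, (∫⁻ s in Ioo (0:ℝ) 1,
        ‖c m * (g (m+1)).indicator (fun _ => (1:ℝ)) s‖₊ ∂volume)
        ≤ ENNReal.ofReal (((1:ℝ)/4)^(m+1)) := by
      intro m
      rw [hlint m, hvol' m, ← ENNReal.ofReal_mul (hc_nonneg m)]
      apply ENNReal.ofReal_le_ofReal
      rw [key_arith t m]
      exact fS_le t m
    refine ne_top_of_le_ne_top ?_ (ENNReal.tsum_le_tsum hb)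
    rw [← ENNReal.ofReal_tsum_of_nonneg (fun m => by positivity) geo_summable]
    exact ENNReal.ofReal_ne_top
  rw [integral_tsum hmeas_i hfin]
  refine tsum_congr fun m => ?_
  rw [integral_const_mul, setIntegral_indicator (hmeas (m+1)),
    inter_eq_self_of_subset_right (hsub (m+1)), setIntegral_const, smul_eq_mul, mul_one,
    measureReal_def, hvol' m, ENNReal.toReal_ofReal (rp4_pos _).le]
  exact key_arith t m


/-- Let `(g_k)_{k≥1}` be pairwise disjoint measurable subsets of `(0,1)` with
`λ(g_k) = 4^{-k-4^k}`, and `y = ∑_{k≥1} 4^{4^k} χ_{g_k}`. Then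
`∫₀¹ min{y(s), t y(s)²} ds ∼ 1/log(e/t)` for `0 < t ≤ 1`. -/
theorem sharpness_integral_y
    (g : ℕ → Set ℝ)
    (hmeas : ∀ k, MeasurableSet (g k))
    (hsub : ∀ k, g k ⊆ Ioo (0:ℝ) 1)
    (hdisj : Pairwise (Function.onFun Disjoint g))
    (hvol : ∀ k : ℕ, 1 ≤ k →
      volume (g k) = ENNReal.ofReal ((4:ℝ) ^ (-(k:ℝ) - (4:ℝ) ^ (k:ℝ))))
    (y : ℝ → ℝ)
    (hy : ∀ s, y s =
      ∑' k : ℕ, (4:ℝ) ^ ((4:ℝ) ^ ((k:ℝ) + 1)) * (g (k + 1)).indicator (fun _ => (1:ℝ)) s) :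
    ∃ C > (0:ℝ), ∀ t : ℝ, 0 < t → t ≤ 1 →
      C⁻¹ / Real.log (Real.exp 1 / t) ≤ (∫ s in Ioo (0:ℝ) 1, min (y s) (t * y s ^ 2)) ∧
        (∫ s in Ioo (0:ℝ) 1, min (y s) (t * y s ^ 2)) ≤ C / Real.log (Real.exp 1 / t) := by
  refine ⟨32, by norm_num, fun t ht ht1 => ?_⟩
  rw [integral_eq g hmeas hsub hdisj hvol y hy t ht]
  obtain ⟨h1, h2⟩ := S_bounds t ht ht1
  constructor
  · rw [show ((32:ℝ))⁻¹ = 1/32 by norm_num]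
    exact h1
  · exact h2
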